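/- Three states with Γ > 0 under the triangle condition: let α_1, α_2, α_3 > 0 and let N be the 3×3 real symmetric matrix with diagonal entries 1 and off-diagonal entries N₁₂ = α_1α_2, N₂₃ = α_2α_3, N₃₁ = α_3α_1; assume N is positive definite, and let η_1, η_2, η_3 > 0 with η_1 + η_2 + η_3 = 1. If the triangle condition holds, i.e., α_i√η_i ≤ α_j√η_j + α_k√η_k for every permutation (i,j,k) of (1,2,3), then the maximum of Σ_i η_i x_i over x ∈ ℝ³ with N − diag(x) positive semidefinite (no sign constraint) equals 1 − (η_1α_1² + η_2α_2² + η_3α_3²), and it is attained at x_i = 1 − α_i² (i = 1,2,3). Moreover, if in addition α_i ≤ 1 for all i, this x also solves the problem with the constraints x_i ≥ 0. -/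

import Mathlib

lemma quad3 (M : Matrix (Fin 3) (Fin 3) ℝ) (v : Fin 3 → ℝ) :
    dotProduct (star v) (M.mulVec v) =
      v 0 * (M 0 0 * v 0 + M 0 1 * v 1 + M 0 2 * v 2) +
      v 1 * (M 1 0 * v 0 + M 1 1 * v 1 + M 1 2 * v 2) +
      v 2 * (M 2 0 * v 0 + M 2 1 * v 1 + M 2 2 * v 2) := by
  simp [dotProduct, Matrix.mulVec, Fin.sum_univ_three]

set_option maxHeartbeats 2000000 in
/-- Three pure states with `Γ > 0` under the triangle condition: the maximum of
the relaxed problem is `1 - (η₁α₁² + η₂α₂² + η₃α₃²)`, attained at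
`x_i = 1 - α_i²`; if moreover `α_i ≤ 1` for all `i`, this point also solves the
problem with the sign constraints `x_i ≥ 0`. -/
theorem three_state_gamma_pos_triangle
    (α₁ α₂ α₃ η₁ η₂ η₃ : ℝ)
    (hα₁ : 0 < α₁) (hα₂ : 0 < α₂) (hα₃ : 0 < α₃)
    (hN : (!![1, α₁ * α₂, α₃ * α₁; α₁ * α₂, 1, α₂ * α₃; α₃ * α₁, α₂ * α₃, 1] :
      Matrix (Fin 3) (Fin 3) ℝ).PosDef)
    (hη₁ : 0 < η₁) (hη₂ : 0 < η₂) (hη₃ : 0 < η₃) (hsum : η₁ + η₂ + η₃ = 1)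
    (htri₁ : α₁ * Real.sqrt η₁ ≤ α₂ * Real.sqrt η₂ + α₃ * Real.sqrt η₃)
    (htri₂ : α₂ * Real.sqrt η₂ ≤ α₁ * Real.sqrt η₁ + α₃ * Real.sqrt η₃)
    (htri₃ : α₃ * Real.sqrt η₃ ≤ α₁ * Real.sqrt η₁ + α₂ * Real.sqrt η₂) :
    IsGreatest {p : ℝ | ∃ x : Fin 3 → ℝ,
        (!![1, α₁ * α₂, α₃ * α₁; α₁ * α₂, 1, α₂ * α₃; α₃ * α₁, α₂ * α₃, 1] -
          Matrix.diagonal x).PosSemidef ∧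
        p = η₁ * x 0 + η₂ * x 1 + η₃ * x 2}
      (1 - (η₁ * α₁ ^ 2 + η₂ * α₂ ^ 2 + η₃ * α₃ ^ 2)) ∧
    ((!![1, α₁ * α₂, α₃ * α₁; α₁ * α₂, 1, α₂ * α₃; α₃ * α₁, α₂ * α₃, 1] -
        Matrix.diagonal ![1 - α₁ ^ 2, 1 - α₂ ^ 2, 1 - α₃ ^ 2]).PosSemidef ∧
      η₁ * (1 - α₁ ^ 2) + η₂ * (1 - α₂ ^ 2) + η₃ * (1 - α₃ ^ 2) =
        1 - (η₁ * α₁ ^ 2 + η₂ * α₂ ^ 2 + η₃ * α₃ ^ 2)) ∧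
    (α₁ ≤ 1 → α₂ ≤ 1 → α₃ ≤ 1 →
      IsGreatest {p : ℝ | ∃ x : Fin 3 → ℝ, (∀ i, 0 ≤ x i) ∧
          (!![1, α₁ * α₂, α₃ * α₁; α₁ * α₂, 1, α₂ * α₃; α₃ * α₁, α₂ * α₃, 1] -
            Matrix.diagonal x).PosSemidef ∧
          p = η₁ * x 0 + η₂ * x 1 + η₃ * x 2}
        (1 - (η₁ * α₁ ^ 2 + η₂ * α₂ ^ 2 + η₃ * α₃ ^ 2))) := by
  clear hN
  have hb₁ : (α₁ * Real.sqrt η₁) ^ 2 = α₁ ^ 2 * η₁ := by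
    rw [mul_pow, Real.sq_sqrt hη₁.le]
  have hb₂ : (α₂ * Real.sqrt η₂) ^ 2 = α₂ ^ 2 * η₂ := by
    rw [mul_pow, Real.sq_sqrt hη₂.le]
  have hb₃ : (α₃ * Real.sqrt η₃) ^ 2 = α₃ ^ 2 * η₃ := by
    rw [mul_pow, Real.sq_sqrt hη₃.le]
  set b₁ := α₁ * Real.sqrt η₁ with hb₁def
  set b₂ := α₂ * Real.sqrt η₂ with hb₂def
  set b₃ := α₃ * Real.sqrt η₃ with hb₃def
  have hb₁0 : 0 ≤ b₁ := mul_nonneg hα₁.le (Real.sqrt_nonneg _)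
  have hb₂0 : 0 ≤ b₂ := mul_nonneg hα₂.le (Real.sqrt_nonneg _)
  have hb₃0 : 0 ≤ b₃ := mul_nonneg hα₃.le (Real.sqrt_nonneg _)
  have hprod : 0 ≤ (b₁ + b₂ + b₃) * ((b₁ + b₂ - b₃) * ((b₃ + b₁ - b₂) * (b₃ - b₁ + b₂))) := by
    apply mul_nonneg (by linarith)
    apply mul_nonneg (by linarith)
    exact mul_nonneg (by linarith) (by linarith)
  -- Heron nonnegativity
  have hH : 0 ≤ 4 * (α₁ ^ 2 * η₁) * (α₂ ^ 2 * η₂) -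
      (α₃ ^ 2 * η₃ - α₁ ^ 2 * η₁ - α₂ ^ 2 * η₂) ^ 2 := by
    rw [← hb₁, ← hb₂, ← hb₃]
    nlinarith [hprod]
  -- explicit form of the matrix N - diag x
  have hM : ∀ x : Fin 3 → ℝ,
      (!![1, α₁ * α₂, α₃ * α₁; α₁ * α₂, 1, α₂ * α₃; α₃ * α₁, α₂ * α₃, 1] -
        Matrix.diagonal x) =
      !![1 - x 0, α₁ * α₂, α₃ * α₁; α₁ * α₂, 1 - x 1, α₂ * α₃;
         α₃ * α₁, α₂ * α₃, 1 - x 2] := by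
    intro x
    ext i j
    fin_cases i <;> fin_cases j <;> simp [Matrix.diagonal_apply]
  -- the upper bound for the relaxed problem
  have hub : ∀ x : Fin 3 → ℝ,
      (!![1, α₁ * α₂, α₃ * α₁; α₁ * α₂, 1, α₂ * α₃; α₃ * α₁, α₂ * α₃, 1] -
        Matrix.diagonal x).PosSemidef →
      η₁ * x 0 + η₂ * x 1 + η₃ * x 2 ≤
        1 - (η₁ * α₁ ^ 2 + η₂ * α₂ ^ 2 + η₃ * α₃ ^ 2) := by
    intro x hx
    rw [hM x] at hx
    have hu0 := hx.dotProduct_mulVec_nonneg ![2 * α₁ * α₂ * α₃ * η₁,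
      α₃ * (α₃ ^ 2 * η₃ - α₁ ^ 2 * η₁ - α₂ ^ 2 * η₂),
      α₂ * (α₂ ^ 2 * η₂ - α₁ ^ 2 * η₁ - α₃ ^ 2 * η₃)]
    have hw0 := hx.dotProduct_mulVec_nonneg ![0, α₃, -α₂]
    rw [quad3] at hu0 hw0
    simp only [Fin.isValue, Matrix.of_apply, Matrix.cons_val', Matrix.cons_val_zero,
      Matrix.cons_val_one, Matrix.head_cons, Matrix.empty_val', Matrix.cons_val_fin_one,
      Matrix.cons_val_two, Nat.succ_eq_add_one, Nat.reduceAdd, Matrix.tail_cons,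
      Matrix.head_fin_const] at hu0 hw0
    have hu' : 0 ≤ (2*α₁*α₂*α₃*η₁)^2*(1 - x 0) + (α₃*(α₃^2*η₃ - α₁^2*η₁ - α₂^2*η₂))^2*(1 - x 1) + (α₂*(α₂^2*η₂ - α₁^2*η₁ - α₃^2*η₃))^2*(1 - x 2) + 2*(2*α₁*α₂*α₃*η₁)*(α₃*(α₃^2*η₃ - α₁^2*η₁ - α₂^2*η₂))*(α₁*α₂) + 2*(2*α₁*α₂*α₃*η₁)*(α₂*(α₂^2*η₂ - α₁^2*η₁ - α₃^2*η₃))*(α₃*α₁) + 2*(α₃*(α₃^2*η₃ - α₁^2*η₁ - α₂^2*η₂))*(α₂*(α₂^2*η₂ - α₁^2*η₁ - α₃^2*η₃))*(α₂*α₃) := by linarith [hu0]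
    have hw' : 0 ≤ α₃^2*(1 - x 1) + α₂^2*(1 - x 2) - 2*α₂^2*α₃^2 := by linarith [hw0]
    have hHw := mul_nonneg hH hw'
    have hc : 0 < 4*(α₁^2*η₁)*α₂^2*α₃^2 := by positivity
    have hid : ((2*α₁*α₂*α₃*η₁)^2*(1 - x 0) + (α₃*(α₃^2*η₃ - α₁^2*η₁ - α₂^2*η₂))^2*(1 - x 1) + (α₂*(α₂^2*η₂ - α₁^2*η₁ - α₃^2*η₃))^2*(1 - x 2) + 2*(2*α₁*α₂*α₃*η₁)*(α₃*(α₃^2*η₃ - α₁^2*η₁ - α₂^2*η₂))*(α₁*α₂) + 2*(2*α₁*α₂*α₃*η₁)*(α₂*(α₂^2*η₂ - α₁^2*η₁ - α₃^2*η₃))*(α₃*α₁) + 2*(α₃*(α₃^2*η₃ - α₁^2*η₁ - α₂^2*η₂))*(α₂*(α₂^2*η₂ - α₁^2*η₁ - α₃^2*η₃))*(α₂*α₃)) + (4*(α₁^2*η₁)*(α₂^2*η₂) - (α₃^2*η₃ - α₁^2*η₁ - α₂^2*η₂)^2)*(α₃^2*(1 - x 1) + α₂^2*(1 - x 2) - 2*α₂^2*α₃^2)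 =
        (4*(α₁^2*η₁)*α₂^2*α₃^2) * ((η₁+η₂+η₃) - (η₁*α₁^2 + η₂*α₂^2 + η₃*α₃^2) - (η₁ * x 0 + η₂ * x 1 + η₃ * x 2)) := by
      ring
    have h0 : 0 ≤ (4*(α₁^2*η₁)*α₂^2*α₃^2) * ((η₁+η₂+η₃) - (η₁*α₁^2 + η₂*α₂^2 + η₃*α₃^2) - (η₁ * x 0 + η₂ * x 1 + η₃ * x 2)) := by
      rw [← hid]; exact add_nonneg hu' hHw
    have h1 := (mul_nonneg_iff_of_pos_left hc).mp h0
    rw [← hsum]; linarith [h1]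
  -- positive semidefiniteness at the optimal point
  have hpsd : (!![1, α₁ * α₂, α₃ * α₁; α₁ * α₂, 1, α₂ * α₃; α₃ * α₁, α₂ * α₃, 1] -
      Matrix.diagonal ![1 - α₁ ^ 2, 1 - α₂ ^ 2, 1 - α₃ ^ 2]).PosSemidef := by
    rw [hM]
    apply Matrix.PosSemidef.of_dotProduct_mulVec_nonneg
    · ext i j
      fin_cases i <;> fin_cases j <;>
        simp [Matrix.conjTranspose_apply] <;> ring
    · intro z
      rw [quad3]
      simp only [Fin.isValue, Matrix.of_apply, Matrix.cons_val', Matrix.cons_val_zero,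
        Matrix.cons_val_one, Matrix.head_cons, Matrix.empty_val', Matrix.cons_val_fin_one,
        Matrix.cons_val_two, Nat.succ_eq_add_one, Nat.reduceAdd, Matrix.tail_cons,
        Matrix.head_fin_const]
      nlinarith [sq_nonneg (α₁ * z 0 + α₂ * z 1 + α₃ * z 2)]
  have hval : η₁ * (1 - α₁ ^ 2) + η₂ * (1 - α₂ ^ 2) + η₃ * (1 - α₃ ^ 2) =
      1 - (η₁ * α₁ ^ 2 + η₂ * α₂ ^ 2 + η₃ * α₃ ^ 2) := by
    nlinarith [hsum]
  have hvv : (1 : ℝ) - (η₁ * α₁ ^ 2 + η₂ * α₂ ^ 2 + η₃ * α₃ ^ 2) =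
      η₁ * (![1 - α₁ ^ 2, 1 - α₂ ^ 2, 1 - α₃ ^ 2] : Fin 3 → ℝ) 0 +
      η₂ * ![1 - α₁ ^ 2, 1 - α₂ ^ 2, 1 - α₃ ^ 2] 1 +
      η₃ * ![1 - α₁ ^ 2, 1 - α₂ ^ 2, 1 - α₃ ^ 2] 2 := by
    simp only [Matrix.cons_val_zero, Matrix.cons_val_one, Matrix.head_cons,
      Matrix.cons_val_two, Matrix.tail_cons]
    linarith [hval]
  refine ⟨⟨⟨![1 - α₁ ^ 2, 1 - α₂ ^ 2, 1 - α₃ ^ 2], hpsd, hvv⟩, ?_⟩, ⟨hpsd, hval⟩, ?_⟩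
  · rintro p ⟨x, hx, rfl⟩
    exact hub x hx
  · intro h1 h2 h3
    refine ⟨⟨![1 - α₁ ^ 2, 1 - α₂ ^ 2, 1 - α₃ ^ 2], ?_, hpsd, hvv⟩, ?_⟩
    · intro i
      fin_cases i <;> simp [abs_le] <;> exact ⟨by linarith, by assumption⟩
    · rintro p ⟨x, _, hx, rfl⟩
      exact hub x hx
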